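/- Let T = 𝔱/Λ be a torus with an automorphism σ of finite order preserving Λ. Then the coinvariant torus T_σ = T/(Id − σ)(T) is connected and equals 𝔱^σ/π(Λ), where π : 𝔱 → 𝔱^σ is orthogonal projection with respect to a σ-invariant inner product. Moreover, orthogonal projection induces an isomorphism Λ_σ/Tor(Λ_σ) ≅ π(Λ). -/

import Mathlib

open scoped RealInnerProductSpace

/-- Let `T = 𝔱/Λ` be a torus (`Λ` a full lattice, generated by an `ℝ`-basis `bV` of `𝔱`)
with a finite-order automorphism `σ` preserving `Λ` (and a `σ`-invariant inner
product), inducing `σT` on `T`. Then the coinvariant torus `T_σ = T/(Id − σT)(T)` is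
connected and equals (is isomorphic to) `𝔱^σ/π(Λ)`, where `π : 𝔱 → 𝔱^σ` is the
orthogonal projection onto the fixed subspace `K = 𝔱^σ`. Moreover, orthogonal
projection induces an isomorphism `Λ_σ/Tor(Λ_σ) ≅ π(Λ)`. -/
theorem coinvariant_torus {V : Type*} [NormedAddCommGroup V] [InnerProductSpace ℝ V]
    [FiniteDimensional ℝ V] {ι : Type*} [Fintype ι] (bV : Module.Basis ι ℝ V)
    (Λ : AddSubgroup V) (hΛ : Λ = AddSubgroup.closure (Set.range bV))
    (σ : V ≃ₗ[ℝ] V) (hord : ∃ m : ℕ, 0 < m ∧ σ ^ m = 1)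
    (hinner : ∀ x y : V, ⟪σ x, σ y⟫ = ⟪x, y⟫)
    (hσΛ : ∀ x ∈ Λ, σ x ∈ Λ)
    (σT : (V ⧸ Λ) →+ (V ⧸ Λ))
    (hσT : ∀ x : V, σT (QuotientAddGroup.mk x) = QuotientAddGroup.mk (σ x))
    (NΛ : AddSubgroup ↥Λ)
    (hNΛ : (NΛ : Set ↥Λ) = {z : ↥Λ | ∃ x : ↥Λ, (z : V) = (x : V) - σ (x : V)})
    (K : Submodule ℝ V) (hK : ∀ x : V, x ∈ K ↔ σ x = x)
    (πΛ : AddSubgroup ↥K)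
    (hπΛ : πΛ = AddSubgroup.map
      ((Submodule.orthogonalProjection K).toLinearMap.toAddMonoidHom) Λ) :
    ConnectedSpace
      ((V ⧸ Λ) ⧸ AddMonoidHom.range (AddMonoidHom.id (V ⧸ Λ) - σT)) ∧
    Nonempty
      (((V ⧸ Λ) ⧸ AddMonoidHom.range (AddMonoidHom.id (V ⧸ Λ) - σT)) ≃+ (↥K ⧸ πΛ)) ∧
    ∃ e : ((↥Λ ⧸ NΛ) ⧸ AddCommGroup.torsion (↥Λ ⧸ NΛ)) ≃+ ↥πΛ,
      ∀ x : ↥Λ,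
        ((e (QuotientAddGroup.mk (QuotientAddGroup.mk x)) : ↥K)) =
          Submodule.orthogonalProjection K (x : V) := by
  classical
  obtain ⟨m, hm, hσm⟩ := hord
  have hmR : (m : ℝ) ≠ 0 := Nat.cast_ne_zero.mpr hm.ne'
  -- basic facts about σ and K
  have hσK : ∀ k ∈ K, σ k = k := fun k hk => (hK k).1 hk
  have hinner' : ∀ (x : V), ∀ k ∈ K, ⟪σ x, k⟫ = ⟪x, k⟫ := by
    intro x k hk
    conv_lhs => rw [← hσK k hk]
    exact hinner x k
  have hsubO : ∀ x : V, x - σ x ∈ Kᗮ := by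
    intro x
    rw [Submodule.mem_orthogonal']
    intro k hk
    rw [inner_sub_left, hinner' x k hk, sub_self]
  have hpow_inner : ∀ (i : ℕ) (x : V), ∀ k ∈ K, ⟪(σ ^ i) x, k⟫ = ⟪x, k⟫ := by
    intro i
    induction i with
    | zero => intro x k hk; simp
    | succ n ih =>
      intro x k hk
      have : (σ ^ (n + 1)) x = σ ((σ ^ n) x) := by
        rw [pow_succ']; rfl
      rw [this, hinner' _ k hk, ih x k hk]
  have hpowΛ : ∀ (i : ℕ), ∀ x ∈ Λ, (σ ^ i) x ∈ Λ := by
    intro i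
    induction i with
    | zero => intro x hx; simpa using hx
    | succ n ih =>
      intro x hx
      have : (σ ^ (n + 1)) x = σ ((σ ^ n) x) := by rw [pow_succ']; rfl
      rw [this]; exact hσΛ _ (ih x hx)
  -- shifting the sum
  have hshift : ∀ x : V, ∑ i ∈ Finset.range m, (σ ^ (i + 1)) x
      = ∑ i ∈ Finset.range m, (σ ^ i) x := by
    intro x
    have h1 := Finset.sum_range_succ' (fun i => (σ ^ i) x) m
    have h2 := Finset.sum_range_succ (fun i => (σ ^ i) x) m
    have hm0 : (σ ^ m) x = (σ ^ 0) x := by rw [hσm]; simp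
    have := h1.symm.trans h2
    simp only [hm0] at this
    simpa using add_right_cancel this
  -- averaging formula for orthogonal projection
  have havg : ∀ x : V, (Submodule.orthogonalProjection K x : V)
      = (m : ℝ)⁻¹ • ∑ i ∈ Finset.range m, (σ ^ i) x := by
    intro x
    set e := (m : ℝ)⁻¹ • ∑ i ∈ Finset.range m, (σ ^ i) x with he
    have heK : e ∈ K := by
      rw [hK]
      rw [he, map_smul]
      congr 1
      rw [map_sum]
      calc ∑ i ∈ Finset.range m, σ ((σ ^ i) x)
          = ∑ i ∈ Finset.range m, (σ ^ (i + 1)) x := by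
            refine Finset.sum_congr rfl fun i _ => ?_
            rw [pow_succ']; rfl
        _ = ∑ i ∈ Finset.range m, (σ ^ i) x := hshift x
    refine Submodule.eq_starProjection_of_mem_orthogonal heK ?_
    rw [Submodule.mem_orthogonal']
    intro k hk
    rw [inner_sub_left, he, real_inner_smul_left, sum_inner]
    have : ∑ i ∈ Finset.range m, ⟪(σ ^ i) x, k⟫ = (m : ℝ) * ⟪x, k⟫ := by
      rw [Finset.sum_congr rfl fun i _ => hpow_inner i x k hk]
      simp [mul_comm]
    rw [this, inv_mul_cancel_left₀ hmR, sub_self]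
  -- π is invariant under σ
  have hπσ : ∀ x : V, Submodule.orthogonalProjection K (σ x) = Submodule.orthogonalProjection K x := by
    intro x
    have h0 : Submodule.orthogonalProjection K (σ x - x) = 0 :=
      Submodule.orthogonalProjectionOnto_apply_of_mem_orthogonal
        (by simpa using (Kᗮ).neg_mem (hsubO x))
    have := map_sub (Submodule.orthogonalProjection K) (σ x) x
    rw [h0] at this
    exact (sub_eq_zero.mp this.symm)
  -- range of (1 - σ) is Kᗮ
  have hrange : ∀ v : V, (Submodule.orthogonalProjection K v : V) = 0 → ∃ w : V, v = w - σ w := by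
    set f : V →ₗ[ℝ] V := LinearMap.id - (σ : V →ₗ[ℝ] V) with hf
    have hker : LinearMap.ker f = K := by
      ext x
      simp only [LinearMap.mem_ker, hf, LinearMap.sub_apply, LinearMap.id_apply,
        LinearEquiv.coe_coe, sub_eq_zero, hK]
      exact eq_comm
    have hle : LinearMap.range f ≤ Kᗮ := by
      rintro _ ⟨x, rfl⟩
      simpa [hf] using hsubO x
    have hrk : LinearMap.range f = Kᗮ := by
      apply Submodule.eq_of_le_of_finrank_eq hle
      have h1 := LinearMap.finrank_range_add_finrank_ker f
      have h2 := Submodule.finrank_add_finrank_orthogonal K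
      rw [hker] at h1
      omega
    intro v hv
    have hvO : v ∈ Kᗮ := by
      have : v - (Submodule.orthogonalProjection K v : V) ∈ Kᗮ :=
          Submodule.sub_starProjection_mem_orthogonal (K := K) v
      rwa [hv, sub_zero] at this
    rw [← hrk] at hvO
    obtain ⟨w, hw⟩ := hvO
    exact ⟨w, by simpa [hf, eq_comm] using hw⟩
  -- the quotient group
  set R : AddSubgroup (V ⧸ Λ) := AddMonoidHom.range (AddMonoidHom.id (V ⧸ Λ) - σT) with hR
  -- connectedness
  have hconn : ConnectedSpace ((V ⧸ Λ) ⧸ R) := by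
    have hsurj : Function.Surjective
        (fun v : V => (QuotientAddGroup.mk (QuotientAddGroup.mk v : V ⧸ Λ) : (V ⧸ Λ) ⧸ R)) :=
      (QuotientAddGroup.mk'_surjective R).comp (QuotientAddGroup.mk'_surjective Λ)
    exact hsurj.connectedSpace (continuous_quotient_mk'.comp continuous_quotient_mk')
  refine ⟨hconn, ?_, ?_⟩
  -- part 2 : iso with K ⧸ πΛ
  · set ψ : V →+ (↥K ⧸ πΛ) :=
      (QuotientAddGroup.mk' πΛ).comp (Submodule.orthogonalProjection K).toLinearMap.toAddMonoidHom with hψ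
    have hψapp : ∀ v : V, ψ v = QuotientAddGroup.mk (Submodule.orthogonalProjection K v) := fun v => rfl
    have hΛker : ∀ x ∈ Λ, ψ x = 0 := by
      intro x hx
      rw [hψapp, QuotientAddGroup.eq_zero_iff, hπΛ]
      exact ⟨x, hx, rfl⟩
    set Ψ1 : (V ⧸ Λ) →+ (↥K ⧸ πΛ) := QuotientAddGroup.lift Λ ψ hΛker with hΨ1
    have hΨ1app : ∀ v : V, Ψ1 (QuotientAddGroup.mk v) = ψ v := fun v => rfl
    have hRker : ∀ y ∈ R, Ψ1 y = 0 := by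
      rintro _ ⟨z, rfl⟩
      obtain ⟨v, rfl⟩ := QuotientAddGroup.mk'_surjective Λ z
      have : (AddMonoidHom.id (V ⧸ Λ) - σT) (QuotientAddGroup.mk v)
          = QuotientAddGroup.mk (v - σ v) := by
        simp only [AddMonoidHom.sub_apply, AddMonoidHom.id_apply, hσT]
        rfl
      rw [show ((QuotientAddGroup.mk' Λ) v) = (QuotientAddGroup.mk v : V ⧸ Λ) from rfl, this,
        hΨ1app, hψapp, QuotientAddGroup.eq_zero_iff]
      have : Submodule.orthogonalProjection K (v - σ v) = 0 := by
        rw [map_sub, hπσ, sub_self]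
      rw [this]
      exact zero_mem _
    set Ψ : ((V ⧸ Λ) ⧸ R) →+ (↥K ⧸ πΛ) := QuotientAddGroup.lift R Ψ1 hRker with hΨ
    have hΨapp : ∀ v : V, Ψ (QuotientAddGroup.mk (QuotientAddGroup.mk v)) = ψ v := fun v => rfl
    have hsurj : Function.Surjective Ψ := by
      intro c
      obtain ⟨k, rfl⟩ := QuotientAddGroup.mk'_surjective πΛ c
      refine ⟨QuotientAddGroup.mk (QuotientAddGroup.mk (k : V)), ?_⟩
      rw [hΨapp, hψapp]
      congr 1
      ext
      exact Submodule.starProjection_eq_self_iff.mpr k.2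
    have hinj : Function.Injective Ψ := by
      rw [injective_iff_map_eq_zero]
      intro a ha
      obtain ⟨b, rfl⟩ := QuotientAddGroup.mk'_surjective R a
      obtain ⟨v, rfl⟩ := QuotientAddGroup.mk'_surjective Λ b
      rw [show ((QuotientAddGroup.mk' R) ((QuotientAddGroup.mk' Λ) v))
          = (QuotientAddGroup.mk (QuotientAddGroup.mk v) : (V ⧸ Λ) ⧸ R) from rfl] at ha ⊢
      rw [hΨapp, hψapp, QuotientAddGroup.eq_zero_iff, hπΛ] at ha
      obtain ⟨lam, hlam, hlam2⟩ := ha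
      have hπ0 : (Submodule.orthogonalProjection K (lam - v) : V) = 0 := by
        have : Submodule.orthogonalProjection K lam = Submodule.orthogonalProjection K v := hlam2
        rw [map_sub, this, sub_self, Submodule.coe_zero]
      obtain ⟨w, hw⟩ := hrange _ hπ0
      rw [QuotientAddGroup.eq_zero_iff]
      have : (QuotientAddGroup.mk v : V ⧸ Λ) = QuotientAddGroup.mk (v - lam) :=
        (QuotientAddGroup.eq (s := Λ)).mpr (by
          have h : -v + (v - lam) = -lam := by abel
          rw [h]; exact neg_mem hlam)
      rw [this]
      refine ⟨QuotientAddGroup.mk (-w), ?_⟩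
      simp only [AddMonoidHom.sub_apply, AddMonoidHom.id_apply, hσT]
      have : v - lam = -w - σ (-w) := by
        rw [map_neg]
        have : lam - v = w - σ w := hw
        have h2 : v - lam = σ w - w := by
          rw [← neg_sub lam v, this]; abel
        rw [h2]; abel
      rw [this]
      rfl
    exact ⟨AddEquiv.ofBijective Ψ ⟨hinj, hsurj⟩⟩
  -- part 3 : Λ_σ / torsion ≅ πΛ
  · set p0 : ↥Λ →+ ↥K :=
      ((Submodule.orthogonalProjection K).toLinearMap.toAddMonoidHom).comp Λ.subtype with hp0
    have hp0mem : ∀ x : ↥Λ, p0 x ∈ πΛ := by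
      intro x
      rw [hπΛ]
      exact ⟨(x : V), x.2, rfl⟩
    set p : ↥Λ →+ ↥πΛ := p0.codRestrict πΛ hp0mem with hp
    have hpapp : ∀ x : ↥Λ, ((p x : ↥K) : V) = (Submodule.orthogonalProjection K (x : V) : V) :=
      fun x => rfl
    have hNker : ∀ z ∈ NΛ, p z = 0 := by
      intro z hz
      have : z ∈ (NΛ : Set ↥Λ) := hz
      rw [hNΛ] at this
      obtain ⟨x, hx⟩ := this
      ext
      rw [hpapp]
      push_cast [hx]
      rw [map_sub, hπσ, sub_self]
      rfl
    set p1 : (↥Λ ⧸ NΛ) →+ ↥πΛ := QuotientAddGroup.lift NΛ p hNker with hp1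
    have hp1app : ∀ x : ↥Λ, p1 (QuotientAddGroup.mk x) = p x := fun x => rfl
    -- torsion = kernel of p1
    have htor1 : ∀ x : ↥Λ, p1 (QuotientAddGroup.mk x) = 0 →
        m • (QuotientAddGroup.mk x : ↥Λ ⧸ NΛ) = 0 := by
      intro x hx
      have hπ0 : (Submodule.orthogonalProjection K (x : V) : V) = 0 := by
        have h1 : p x = 0 := hx
        have h2 := hpapp x
        rw [h1] at h2
        simpa using h2.symm
      have hsum0 : ∑ i ∈ Finset.range m, (σ ^ i) (x : V) = 0 := by
        have h3 := havg (x : V)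
        rw [hπ0] at h3
        exact ((smul_eq_zero.mp h3.symm).resolve_left (inv_ne_zero hmR))
      -- y = ∑_{i<m} ∑_{j<i} σ^j x
      set yv : V := ∑ i ∈ Finset.range m, ∑ j ∈ Finset.range i, (σ ^ j) (x : V) with hyv
      have hyΛ : yv ∈ Λ := by
        apply AddSubgroup.sum_mem
        intro i _
        apply AddSubgroup.sum_mem
        intro j _
        exact hpowΛ j _ x.2
      have hkey : (m • (x : V)) = yv - σ yv := by
        have htel : ∀ i : ℕ, (x : V) - (σ ^ i) (x : V)
            = (∑ j ∈ Finset.range i, (σ ^ j) (x : V))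
              - σ (∑ j ∈ Finset.range i, (σ ^ j) (x : V)) := by
          intro i
          rw [map_sum]
          rw [← Finset.sum_sub_distrib]
          have : ∀ j, (σ ^ j) (x : V) - σ ((σ ^ j) (x : V))
              = (σ ^ j) (x : V) - (σ ^ (j + 1)) (x : V) := by
            intro j
            congr 1
            rw [pow_succ']; rfl
          rw [Finset.sum_congr rfl fun j _ => this j]
          rw [Finset.sum_range_sub' (fun j => (σ ^ j) (x : V))]
          simp
        calc (m • (x : V)) = ∑ i ∈ Finset.range m, ((x : V) - (σ ^ i) (x : V)) := by
              rw [Finset.sum_sub_distrib, hsum0, sub_zero, Finset.sum_const,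
                Finset.card_range]
          _ = ∑ i ∈ Finset.range m, ((∑ j ∈ Finset.range i, (σ ^ j) (x : V))
              - σ (∑ j ∈ Finset.range i, (σ ^ j) (x : V))) := by
              exact Finset.sum_congr rfl fun i _ => htel i
          _ = yv - σ yv := by
              rw [Finset.sum_sub_distrib, hyv, map_sum]
      have : m • (QuotientAddGroup.mk x : ↥Λ ⧸ NΛ)
          = QuotientAddGroup.mk (m • x) := by
        simp
      rw [this, QuotientAddGroup.eq_zero_iff]
      have : (m • x : ↥Λ) ∈ (NΛ : Set ↥Λ) := by
        rw [hNΛ]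
        refine ⟨⟨yv, hyΛ⟩, ?_⟩
        push_cast
        exact hkey
      exact this
    have htorker : ∀ a : ↥Λ ⧸ NΛ, a ∈ AddCommGroup.torsion (↥Λ ⧸ NΛ) ↔ p1 a = 0 := by
      intro a
      obtain ⟨x, rfl⟩ := QuotientAddGroup.mk'_surjective NΛ a
      rw [show ((QuotientAddGroup.mk' NΛ) x) = (QuotientAddGroup.mk x : ↥Λ ⧸ NΛ) from rfl]
      constructor
      · intro ha
        have hfin : IsOfFinAddOrder (QuotientAddGroup.mk x : ↥Λ ⧸ NΛ) := ha
        obtain ⟨n, hn, hnx⟩ := (isOfFinAddOrder_iff_nsmul_eq_zero).mp hfin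
        have : n • p1 (QuotientAddGroup.mk x) = 0 := by
          rw [← map_nsmul, show (n • (QuotientAddGroup.mk x : ↥Λ ⧸ NΛ)) = 0 from hnx, map_zero]
        have hval : (n : ℝ) • ((p1 (QuotientAddGroup.mk x) : ↥K) : V) = 0 := by
          have := congrArg (fun z : ↥πΛ => ((z : ↥K) : V)) this
          simpa [Nat.cast_smul_eq_nsmul] using this
        have := (smul_eq_zero.mp hval).resolve_left (Nat.cast_ne_zero.mpr hn.ne')
        ext
        exact this
      · intro h
        exact (isOfFinAddOrder_iff_nsmul_eq_zero).mpr ⟨m, hm, htor1 x h⟩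
    have htorle : ∀ a ∈ AddCommGroup.torsion (↥Λ ⧸ NΛ), p1 a = 0 :=
      fun a ha => (htorker a).mp ha
    set p2 : ((↥Λ ⧸ NΛ) ⧸ AddCommGroup.torsion (↥Λ ⧸ NΛ)) →+ ↥πΛ :=
      QuotientAddGroup.lift _ p1 htorle with hp2
    have hp2app : ∀ a : ↥Λ ⧸ NΛ, p2 (QuotientAddGroup.mk a) = p1 a := fun a => rfl
    have hsurj : Function.Surjective p2 := by
      rintro ⟨k, hk⟩
      rw [hπΛ] at hk
      obtain ⟨lam, hlam, hlam2⟩ := hk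
      refine ⟨QuotientAddGroup.mk (QuotientAddGroup.mk (⟨lam, hlam⟩ : ↥Λ)), ?_⟩
      ext
      rw [hp2app, hp1app, hpapp]
      exact congrArg Subtype.val hlam2
    have hinj : Function.Injective p2 := by
      rw [injective_iff_map_eq_zero]
      intro a ha
      obtain ⟨b, rfl⟩ := QuotientAddGroup.mk'_surjective _ a
      rw [show ((QuotientAddGroup.mk' (AddCommGroup.torsion (↥Λ ⧸ NΛ))) b)
          = (QuotientAddGroup.mk b : _) from rfl] at ha ⊢
      rw [hp2app] at ha
      rw [QuotientAddGroup.eq_zero_iff]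
      exact (htorker b).mpr ha
    refine ⟨AddEquiv.ofBijective p2 ⟨hinj, hsurj⟩, ?_⟩
    intro x
    rfl
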